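/- Fix z ∈ ℝⁿ and for the MAPG-1 iterates define v_k := (α−1)(x_k − z) + (k−1)(x_k − x_{k−1}) and E_k := k²β_k min_i(f_i(x_k) − f_i(z)) + (1/2)‖v_k‖². Then E_{k+1} ≤ E_k for all k ≥ 1 (in fact E_{k+1} − E_k + (1/2)k²β_k²‖ξ_k‖² ≤ 0 where ξ_k is the subgradient combination from the proximal step). -/

import Mathlib

theorem stmt_18 (n m : ℕ) (f : Fin (m + 1) → EuclideanSpace ℝ (Fin n) → ℝ)
    (hconv : ∀ i, ConvexOn ℝ Set.univ (f i)) (hlsc : ∀ i, LowerSemicontinuous (f i))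
    (α : ℝ) (hα : 1 ≤ α) (β lam : ℕ → ℝ) (hβ1 : 0 < β 1)
    (hβ : ∀ k : ℕ, 1 ≤ k →
      β (k + 1) = ((k : ℝ) * ((k : ℝ) + α - 1) / ((k : ℝ) + 1) ^ 2) * β k)
    (hlam : ∀ k : ℕ, 1 ≤ k → lam k = (k : ℝ) * β k / ((k : ℝ) + α - 1))
    (x y : ℕ → EuclideanSpace ℝ (Fin n)) (hx01 : x 0 = x 1)
    (hy : ∀ k : ℕ, 1 ≤ k →
      y k = x k + (((k : ℝ) - 1) / ((k : ℝ) + α - 1)) • (x k - x (k - 1)))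
    (hmin : ∀ k : ℕ, 1 ≤ k → ∀ w : EuclideanSpace ℝ (Fin n),
      (Finset.univ.sup' Finset.univ_nonempty (fun i => f i (x (k + 1)) - f i (x k)))
          + 1 / (2 * lam k) * ‖x (k + 1) - y k‖ ^ 2
        ≤ (Finset.univ.sup' Finset.univ_nonempty (fun i => f i w - f i (x k)))
          + 1 / (2 * lam k) * ‖w - y k‖ ^ 2)
    (θ : ℕ → Fin (m + 1) → ℝ)
    (hθ0 : ∀ k i, 0 ≤ θ k i) (hθ1 : ∀ k : ℕ, ∑ i, θ k i = 1)
    (ξi : ℕ → Fin (m + 1) → EuclideanSpace ℝ (Fin n))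
    (hsub : ∀ k : ℕ, 1 ≤ k → ∀ i, ∀ v : EuclideanSpace ℝ (Fin n),
      f i (x (k + 1)) + (inner ℝ (ξi k i) (v - x (k + 1)) : ℝ) ≤ f i v)
    (ξ : ℕ → EuclideanSpace ℝ (Fin n))
    (hξ : ∀ k : ℕ, 1 ≤ k → ξ k = ∑ i, θ k i • ξi k i)
    (hopt : ∀ k : ℕ, 1 ≤ k → ξ k + (1 / lam k) • (x (k + 1) - y k) = 0)
    (hmaxsum : ∀ k : ℕ, 1 ≤ k →
      (Finset.univ.sup' Finset.univ_nonempty (fun i => f i (x (k + 1)) - f i (x k)))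
        = ∑ i, θ k i * (f i (x (k + 1)) - f i (x k)))
    (z : EuclideanSpace ℝ (Fin n))
    (v : ℕ → EuclideanSpace ℝ (Fin n))
    (hv : ∀ k : ℕ, v k = (α - 1) • (x k - z) + ((k : ℝ) - 1) • (x k - x (k - 1)))
    (E : ℕ → ℝ)
    (hE : ∀ k : ℕ, E k = (k : ℝ) ^ 2 * β k *
        (Finset.univ.inf' Finset.univ_nonempty (fun i => f i (x k) - f i z))
        + (1 / 2) * ‖v k‖ ^ 2) :
    ∀ k : ℕ, 1 ≤ k →
      E (k + 1) - E k + (1 / 2) * (k : ℝ) ^ 2 * (β k) ^ 2 * ‖ξ k‖ ^ 2 ≤ 0 ∧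
      E (k + 1) ≤ E k := by

  have hβpos : ∀ k : ℕ, 1 ≤ k → 0 < β k := by
    intro k hk
    induction k, hk using Nat.le_induction with
    | base => exact hβ1
    | succ j hj ih =>
      rw [hβ j hj]
      have hj1 : (1:ℝ) ≤ (j:ℝ) := by exact_mod_cast hj
      have h1 : (0:ℝ) < (j:ℝ) * ((j:ℝ) + α - 1) := by nlinarith
      have h2 : (0:ℝ) < ((j:ℝ) + 1) ^ 2 := by positivity
      push_cast
      exact mul_pos (div_pos h1 h2) ih
  intro k hk
  have hk1 : (1:ℝ) ≤ (k:ℝ) := by exact_mod_cast hk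
  have hβk : 0 < β k := hβpos k hk
  have hkα : (0:ℝ) < (k:ℝ) + α - 1 := by linarith
  have hlampos : 0 < lam k := by
    rw [hlam k hk]
    exact div_pos (mul_pos (by linarith) hβk) hkα
  -- step: x(k+1) = y k - lam k • ξ k
  have h1 : x (k+1) - y k = -(lam k • ξ k) := by
    have h0 := hopt k hk
    have h0' : (1 / lam k) • (x (k+1) - y k) = -ξ k :=
      eq_neg_of_add_eq_zero_right h0
    have : lam k • ((1 / lam k) • (x (k+1) - y k)) = lam k • (-ξ k) := by rw [h0']
    rw [smul_smul, mul_one_div, div_self hlampos.ne', one_smul, smul_neg] at this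
    exact this
  have hx1 : x (k+1) = x k + (((k:ℝ) - 1) / ((k:ℝ) + α - 1)) • (x k - x (k-1))
      - ((k:ℝ) * β k / ((k:ℝ) + α - 1)) • ξ k := by
    have h2 := eq_add_of_sub_eq h1
    rw [neg_add_eq_sub, hy k hk, hlam k hk] at h2
    exact h2
  -- v recursion
  have hvrec : v (k+1) = v k - ((k:ℝ) * β k) • ξ k := by
    rw [hv (k+1), hv k]
    simp only [Nat.add_sub_cancel]
    push_cast
    rw [hx1]
    match_scalars <;> field_simp <;> ring
  -- norm expansion
  have hnorm : ‖v (k+1)‖^2 = ‖v k‖^2 - 2*((k:ℝ)*β k)*(inner ℝ (ξ k) (v k) : ℝ)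
      + ((k:ℝ)*β k)^2*‖ξ k‖^2 := by
    rw [hvrec, norm_sub_sq_real, real_inner_smul_right, real_inner_comm,
      norm_smul, mul_pow, Real.norm_eq_abs, sq_abs]
    ring
  -- coefficient identity
  have hβ1k : ((k:ℝ)+1)^2 * β (k+1) = (k:ℝ)*((k:ℝ)+α-1)*β k := by
    rw [hβ k hk]
    have : ((k:ℝ)+1)^2 ≠ 0 := by positivity
    field_simp
  -- combined subgradient inequality
  have hkey : ∀ w : EuclideanSpace ℝ (Fin n),
      ∑ i, θ k i * (f i (x (k+1)) - f i w) ≤ (inner ℝ (ξ k) (x (k+1) - w) : ℝ) := by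
    intro w
    have h2 : ∀ i, f i (x (k+1)) - f i w ≤ (inner ℝ (ξi k i) (x (k+1) - w) : ℝ) := by
      intro i
      have h3 := hsub k hk i w
      have h4 : (inner ℝ (ξi k i) (w - x (k+1)) : ℝ)
          = -(inner ℝ (ξi k i) (x (k+1) - w) : ℝ) := by
        rw [← inner_neg_right, neg_sub]
      linarith
    calc ∑ i, θ k i * (f i (x (k+1)) - f i w)
        ≤ ∑ i, θ k i * (inner ℝ (ξi k i) (x (k+1) - w) : ℝ) :=
          Finset.sum_le_sum (fun i _ => mul_le_mul_of_nonneg_left (h2 i) (hθ0 k i))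
      _ = (inner ℝ (ξ k) (x (k+1) - w) : ℝ) := by
          rw [hξ k hk, sum_inner]
          exact Finset.sum_congr rfl fun i _ => (real_inner_smul_left _ _ _).symm
  set Fk : ℝ := Finset.univ.inf' Finset.univ_nonempty (fun i => f i (x k) - f i z) with hFk
  set Fk1 : ℝ := Finset.univ.inf' Finset.univ_nonempty (fun i => f i (x (k+1)) - f i z) with hFk1
  -- inequality (a)
  have ha : Fk1 - Fk ≤ (inner ℝ (ξ k) (x (k+1) - x k) : ℝ) := by
    obtain ⟨j, _, hj⟩ := Finset.exists_mem_eq_inf' (Finset.univ_nonempty)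
      (fun i => f i (x k) - f i z)
    have h3 : Fk1 ≤ f j (x (k+1)) - f j z := Finset.inf'_le _ (Finset.mem_univ j)
    have h4 : f j (x (k+1)) - f j (x k)
        ≤ Finset.univ.sup' Finset.univ_nonempty (fun i => f i (x (k+1)) - f i (x k)) := by
      exact Finset.le_sup' (fun i => f i (x (k+1)) - f i (x k)) (Finset.mem_univ j)
    have h5 := hmaxsum k hk
    have h6 := hkey (x k)
    rw [hFk, hj]
    linarith
  -- inequality (b)
  have hb : Fk1 ≤ (inner ℝ (ξ k) (x (k+1) - z) : ℝ) := by
    have h7 : Fk1 ≤ ∑ i, θ k i * (f i (x (k+1)) - f i z) := by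
      calc Fk1 = ∑ i, θ k i * Fk1 := by rw [← Finset.sum_mul, hθ1 k, one_mul]
        _ ≤ ∑ i, θ k i * (f i (x (k+1)) - f i z) :=
            Finset.sum_le_sum (fun i _ => mul_le_mul_of_nonneg_left
              (Finset.inf'_le _ (Finset.mem_univ i)) (hθ0 k i))
    exact h7.trans (hkey z)
  -- inner product identity
  have hv1 : (inner ℝ (ξ k) (v (k+1)) : ℝ)
      = (inner ℝ (ξ k) (v k) : ℝ) - (k:ℝ)*β k*‖ξ k‖^2 := by
    rw [hvrec, inner_sub_right, real_inner_smul_right, real_inner_self_eq_norm_sq]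
  have hv2 : (inner ℝ (ξ k) (v (k+1)) : ℝ)
      = (α-1)*(inner ℝ (ξ k) (x (k+1) - z) : ℝ)
        + (k:ℝ)*(inner ℝ (ξ k) (x (k+1) - x k) : ℝ) := by
    rw [hv (k+1)]
    simp only [Nat.add_sub_cancel]
    push_cast
    rw [inner_add_right, real_inner_smul_right, real_inner_smul_right]
    ring
  have hid : (k:ℝ)^2*β k * (inner ℝ (ξ k) (x (k+1) - x k) : ℝ)
      + (k:ℝ)*(α-1)*β k * (inner ℝ (ξ k) (x (k+1) - z) : ℝ)
      = (k:ℝ)*β k * (inner ℝ (ξ k) (v k) : ℝ) - ((k:ℝ)*β k)^2 * ‖ξ k‖^2 := by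
    have h8 := hv1.symm.trans hv2
    linear_combination (-(k:ℝ)*β k) * h8
  -- assemble
  have c1 : (0:ℝ) ≤ (k:ℝ)^2 * β k := by positivity
  have c2 : (0:ℝ) ≤ (k:ℝ)*(α-1)*β k :=
    mul_nonneg (mul_nonneg (by linarith) (by linarith)) hβk.le
  have ha' := mul_le_mul_of_nonneg_left ha c1
  have hb' := mul_le_mul_of_nonneg_left hb c2
  have main : E (k+1) - E k + (1/2) * ((k:ℝ)*β k)^2 * ‖ξ k‖^2 ≤ 0 := by
    have hE1 : E (k+1) = ((k:ℝ)+1)^2 * β (k+1) * Fk1 + 1/2 * ‖v (k+1)‖^2 := by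
      rw [hE (k+1), ← hFk1]
      push_cast
      ring
    have hE0 : E k = (k:ℝ)^2 * β k * Fk + 1/2 * ‖v k‖^2 := by rw [hE k, ← hFk]
    rw [hE1, hE0, hβ1k, hnorm]
    linarith [ha', hb', hid]
  constructor
  · calc E (k + 1) - E k + 1 / 2 * (k:ℝ) ^ 2 * β k ^ 2 * ‖ξ k‖ ^ 2
        = E (k+1) - E k + (1/2) * ((k:ℝ)*β k)^2 * ‖ξ k‖^2 := by ring
      _ ≤ 0 := main
  · have hpos : (0:ℝ) ≤ (1/2) * ((k:ℝ)*β k)^2 * ‖ξ k‖^2 := by positivity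
    linarith
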